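/- arXiv:2408.12399 — 3 statements merged into one kernel-verified Lean document; each statement's English description precedes it below -/
import Mathlib

section
/- For every β > 0, the space Λ_A^β, equipped with the norm ‖x*‖_{Λ_A^β} = ‖x*‖_{X*} + sup_{t>0} t^{m−β} ‖(d/dt)^m T_t* x*‖_{X*}, is a Banach space (i.e. this is a norm on Λ_A^β and Λ_A^β is complete with respect to it). -/
open Filter Topology MeasureTheory Set

noncomputable section

variable {X : Type*} [NormedAddCommGroup X] [NormedSpace ℂ X] [CompleteSpace X]

/-- The `n`-th derivative on `(0,∞)` of the orbit `t ↦ x* ∘ T t` of the dual semigroup. -/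
def dualDeriv (T : ℝ → X →L[ℂ] X) (n : ℕ) (xs : X →L[ℂ] ℂ) (t : ℝ) : X →L[ℂ] ℂ :=
  iteratedDerivWithin n (fun s => xs.comp (T s)) (Set.Ioi 0) t

/-- A uniformly bounded, strongly continuous holomorphic semigroup on `(0,∞)`,
together with the standard properties of its time derivatives. -/
structure IsHoloSG (T : ℝ → X →L[ℂ] X) : Prop where
  semigroup : ∀ s t : ℝ, 0 < s → 0 < t → T (s + t) = (T s).comp (T t)
  strong : ∀ x : X, Tendsto (fun t => T t x) (𝓝[>] (0:ℝ)) (𝓝 x)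
  bounded : ∃ M : ℝ, ∀ t : ℝ, 0 < t → ‖T t‖ ≤ M
  smooth : ContDiffOn ℝ (⊤ : ℕ∞) T (Set.Ioi 0)
  derivComp : ∀ n : ℕ, ∀ s t : ℝ, 0 < s → 0 < t →
    iteratedDerivWithin n T (Set.Ioi 0) (t + s)
      = (iteratedDerivWithin n T (Set.Ioi 0) t).comp (T s)
  derivBound : ∃ C : ℝ, 0 < C ∧ ∀ n : ℕ, 1 ≤ n → ∀ t : ℝ, 0 < t →
    ‖iteratedDerivWithin n T (Set.Ioi 0) t‖ ≤ C ^ n / t ^ n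

/-- The smallest integer `> β` (for `β > 0`). -/
def mExp (β : ℝ) : ℕ := ⌊β⌋₊ + 1

/-- Membership in the Lipschitz space `Λ_A^β`. -/
def MemLambda (T : ℝ → X →L[ℂ] X) (β : ℝ) (xs : X →L[ℂ] ℂ) : Prop :=
  ∃ C : ℝ, ∀ t : ℝ, 0 < t →
    ‖dualDeriv T (mExp β) xs t‖ ≤ C * t ^ (β - (mExp β : ℝ))

/-- The norm of the Lipschitz space `Λ_A^β`. -/
def lambdaNorm (T : ℝ → X →L[ℂ] X) (β : ℝ) (xs : X →L[ℂ] ℂ) : ℝ :=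
  ‖xs‖ + ⨆ t : Set.Ioi (0:ℝ),
    (t : ℝ) ^ ((mExp β : ℝ) - β) * ‖dualDeriv T (mExp β) xs t‖

set_option linter.unusedSectionVars false

lemma dualDeriv_eq (T : ℝ → X →L[ℂ] X) (hT : ContDiffOn ℝ (⊤:ℕ∞) T (Set.Ioi 0))
    (n : ℕ) (xs : X →L[ℂ] ℂ) {t : ℝ} (ht : 0 < t) :
    dualDeriv T n xs t = xs.comp (iteratedDerivWithin n T (Set.Ioi 0) t) := by
  have h := ContinuousLinearMap.iteratedFDerivWithin_comp_left
    (g := (((ContinuousLinearMap.compL ℂ X X ℂ) xs).restrictScalars ℝ))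
    (hT t (Set.mem_Ioi.2 ht)) (uniqueDiffOn_Ioi 0) (Set.mem_Ioi.2 ht) (i := n) (by exact_mod_cast le_top)
  have hfun : (fun s => xs.comp (T s)) =
      ((((ContinuousLinearMap.compL ℂ X X ℂ) xs).restrictScalars ℝ) ∘ T) := rfl
  rw [dualDeriv, iteratedDerivWithin_eq_iteratedFDerivWithin, hfun, h,
    iteratedDerivWithin_eq_iteratedFDerivWithin]
  rfl

lemma dualDeriv_zero' (T : ℝ → X →L[ℂ] X) (hT : ContDiffOn ℝ (⊤:ℕ∞) T (Set.Ioi 0))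
    (n : ℕ) {t : ℝ} (ht : 0 < t) : dualDeriv T n (0 : X →L[ℂ] ℂ) t = 0 := by
  rw [dualDeriv_eq T hT n 0 ht, ContinuousLinearMap.zero_comp]

lemma dualDeriv_add' (T : ℝ → X →L[ℂ] X) (hT : ContDiffOn ℝ (⊤:ℕ∞) T (Set.Ioi 0))
    (n : ℕ) (xs ys : X →L[ℂ] ℂ) {t : ℝ} (ht : 0 < t) :
    dualDeriv T n (xs + ys) t = dualDeriv T n xs t + dualDeriv T n ys t := by
  rw [dualDeriv_eq T hT n _ ht, dualDeriv_eq T hT n _ ht, dualDeriv_eq T hT n _ ht,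
    ContinuousLinearMap.add_comp]

lemma dualDeriv_sub' (T : ℝ → X →L[ℂ] X) (hT : ContDiffOn ℝ (⊤:ℕ∞) T (Set.Ioi 0))
    (n : ℕ) (xs ys : X →L[ℂ] ℂ) {t : ℝ} (ht : 0 < t) :
    dualDeriv T n (xs - ys) t = dualDeriv T n xs t - dualDeriv T n ys t := by
  rw [dualDeriv_eq T hT n _ ht, dualDeriv_eq T hT n _ ht, dualDeriv_eq T hT n _ ht,
    ContinuousLinearMap.sub_comp]

lemma dualDeriv_smul' (T : ℝ → X →L[ℂ] X) (hT : ContDiffOn ℝ (⊤:ℕ∞) T (Set.Ioi 0))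
    (n : ℕ) (c : ℂ) (xs : X →L[ℂ] ℂ) {t : ℝ} (ht : 0 < t) :
    dualDeriv T n (c • xs) t = c • dualDeriv T n xs t := by
  rw [dualDeriv_eq T hT n _ ht, dualDeriv_eq T hT n _ ht, ContinuousLinearMap.smul_comp]

lemma dualDeriv_norm_le (T : ℝ → X →L[ℂ] X) (hT : ContDiffOn ℝ (⊤:ℕ∞) T (Set.Ioi 0))
    (n : ℕ) (xs : X →L[ℂ] ℂ) {t : ℝ} (ht : 0 < t) :
    ‖dualDeriv T n xs t‖ ≤ ‖xs‖ * ‖iteratedDerivWithin n T (Set.Ioi 0) t‖ := by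
  rw [dualDeriv_eq T hT n _ ht]
  exact ContinuousLinearMap.opNorm_comp_le _ _

set_option maxHeartbeats 1600000 in
/-- `Λ_A^β`, with the norm
`‖x*‖ + sup_{t>0} t^{m-β} ‖(d/dt)^m T_t* x*‖`, is a Banach space:
it is a linear subspace of `X*`, `lambdaNorm` is a norm on it, and it is
complete with respect to this norm. -/

theorem stmt0 (T : ℝ → X →L[ℂ] X) (hT : IsHoloSG T) (β : ℝ) (hβ : 0 < β) :
    (MemLambda T β (0 : X →L[ℂ] ℂ)) ∧
    (∀ xs ys : X →L[ℂ] ℂ, MemLambda T β xs → MemLambda T β ys →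
      MemLambda T β (xs + ys)) ∧
    (∀ (c : ℂ) (xs : X →L[ℂ] ℂ), MemLambda T β xs → MemLambda T β (c • xs)) ∧
    (∀ xs : X →L[ℂ] ℂ, MemLambda T β xs → (lambdaNorm T β xs = 0 ↔ xs = 0)) ∧
    (∀ (c : ℂ) (xs : X →L[ℂ] ℂ), MemLambda T β xs →
      lambdaNorm T β (c • xs) = ‖c‖ * lambdaNorm T β xs) ∧
    (∀ xs ys : X →L[ℂ] ℂ, MemLambda T β xs → MemLambda T β ys →
      lambdaNorm T β (xs + ys) ≤ lambdaNorm T β xs + lambdaNorm T β ys) ∧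
    (∀ f : ℕ → X →L[ℂ] ℂ, (∀ k, MemLambda T β (f k)) →
      (∀ ε : ℝ, 0 < ε → ∃ N : ℕ, ∀ p q : ℕ, N ≤ p → N ≤ q →
        lambdaNorm T β (f p - f q) < ε) →
      ∃ g : X →L[ℂ] ℂ, MemLambda T β g ∧
        Tendsto (fun k => lambdaNorm T β (f k - g)) atTop (𝓝 0)) := by
  classical
  have hsm := hT.smooth
  set m : ℕ := mExp β with hm
  -- basic rpow facts
  have hcancel : ∀ t : ℝ, 0 < t → t ^ ((m:ℝ) - β) * t ^ (β - (m:ℝ)) = 1 := by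
    intro t ht
    rw [← Real.rpow_add ht]
    norm_num
  have hrpos : ∀ t : ℝ, 0 < t → (0:ℝ) < t ^ ((m:ℝ) - β) :=
    fun t ht => Real.rpow_pos_of_pos ht _
  have hrpos' : ∀ t : ℝ, 0 < t → (0:ℝ) < t ^ (β - (m:ℝ)) :=
    fun t ht => Real.rpow_pos_of_pos ht _
  -- the sup integrand
  set F : (X →L[ℂ] ℂ) → ℝ → ℝ :=
    fun xs t => t ^ ((m:ℝ) - β) * ‖dualDeriv T m xs t‖ with hF
  have hns : ∀ (c : ℂ) (u : X →L[ℂ] ℂ), ‖c • u‖ = ‖c‖ * ‖u‖ := fun c u => norm_smul c u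
  have hlam : ∀ xs : X →L[ℂ] ℂ,
      lambdaNorm T β xs = ‖xs‖ + ⨆ t : Set.Ioi (0:ℝ), F xs t := fun xs => rfl
  have hFnonneg : ∀ (xs : X →L[ℂ] ℂ) (t : Set.Ioi (0:ℝ)), 0 ≤ F xs t :=
    fun xs t => mul_nonneg (Real.rpow_nonneg (le_of_lt t.2) _) (norm_nonneg _)
  have hsupnonneg : ∀ xs : X →L[ℂ] ℂ, 0 ≤ ⨆ t : Set.Ioi (0:ℝ), F xs t :=
    fun xs => Real.iSup_nonneg (hFnonneg xs)
  have hlamnonneg : ∀ xs : X →L[ℂ] ℂ, 0 ≤ lambdaNorm T β xs := fun xs => by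
    rw [hlam]; exact add_nonneg (norm_nonneg _) (hsupnonneg xs)
  have hmono : ∀ xs : X →L[ℂ] ℂ, ‖xs‖ ≤ lambdaNorm T β xs := fun xs => by
    rw [hlam]; exact le_add_of_nonneg_right (hsupnonneg xs)
  have hsuple : ∀ xs : X →L[ℂ] ℂ,
      (⨆ t : Set.Ioi (0:ℝ), F xs t) ≤ lambdaNorm T β xs := fun xs => by
    rw [hlam]; exact le_add_of_nonneg_left (norm_nonneg _)
  -- MemLambda gives boundedness of F, and conversely
  have hFle : ∀ {xs : X →L[ℂ] ℂ} {C : ℝ},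
      (∀ t : ℝ, 0 < t → ‖dualDeriv T m xs t‖ ≤ C * t ^ (β - (m:ℝ))) →
      ∀ t : ℝ, 0 < t → F xs t ≤ C := by
    intro xs C hC t ht
    have h1 : F xs t ≤ t ^ ((m:ℝ) - β) * (C * t ^ (β - (m:ℝ))) :=
      mul_le_mul_of_nonneg_left (hC t ht) (le_of_lt (hrpos t ht))
    calc F xs t ≤ t ^ ((m:ℝ) - β) * (C * t ^ (β - (m:ℝ))) := h1
      _ = C * (t ^ ((m:ℝ) - β) * t ^ (β - (m:ℝ))) := by ring
      _ = C := by rw [hcancel t ht, mul_one]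
  have hbdd : ∀ {xs : X →L[ℂ] ℂ}, MemLambda T β xs →
      BddAbove (Set.range fun t : Set.Ioi (0:ℝ) => F xs t) := by
    rintro xs ⟨C, hC⟩
    exact ⟨C, by rintro y ⟨t, rfl⟩; exact hFle hC t t.2⟩
  have hFrev : ∀ {xs : X →L[ℂ] ℂ} {K : ℝ},
      (∀ t : ℝ, 0 < t → F xs t ≤ K) →
      ∀ t : ℝ, 0 < t → ‖dualDeriv T m xs t‖ ≤ K * t ^ (β - (m:ℝ)) := by
    intro xs K hK t ht
    have h1 : t ^ (β - (m:ℝ)) * F xs t ≤ t ^ (β - (m:ℝ)) * K :=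
      mul_le_mul_of_nonneg_left (hK t ht) (le_of_lt (hrpos' t ht))
    calc ‖dualDeriv T m xs t‖
        = (t ^ ((m:ℝ) - β) * t ^ (β - (m:ℝ))) * ‖dualDeriv T m xs t‖ := by
          rw [hcancel t ht, one_mul]
      _ = t ^ (β - (m:ℝ)) * F xs t := by rw [hF]; ring
      _ ≤ t ^ (β - (m:ℝ)) * K := h1
      _ = K * t ^ (β - (m:ℝ)) := by ring
  -- the seven conjuncts
  have mem0 : MemLambda T β (0 : X →L[ℂ] ℂ) := by
    refine ⟨0, fun t ht => ?_⟩
    rw [dualDeriv_zero' T hsm m ht]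
    simp
  have memadd : ∀ xs ys : X →L[ℂ] ℂ, MemLambda T β xs → MemLambda T β ys →
      MemLambda T β (xs + ys) := by
    rintro xs ys ⟨C1, h1⟩ ⟨C2, h2⟩
    refine ⟨C1 + C2, fun t ht => ?_⟩
    rw [dualDeriv_add' T hsm m xs ys ht]
    calc ‖dualDeriv T m xs t + dualDeriv T m ys t‖
        ≤ ‖dualDeriv T m xs t‖ + ‖dualDeriv T m ys t‖ := norm_add_le _ _
      _ ≤ C1 * t ^ (β - (m:ℝ)) + C2 * t ^ (β - (m:ℝ)) := add_le_add (h1 t ht) (h2 t ht)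
      _ = (C1 + C2) * t ^ (β - (m:ℝ)) := by ring
  have memsmul : ∀ (c : ℂ) (xs : X →L[ℂ] ℂ), MemLambda T β xs →
      MemLambda T β (c • xs) := by
    rintro c xs ⟨C, hC⟩
    refine ⟨‖c‖ * C, fun t ht => ?_⟩
    rw [dualDeriv_smul' T hsm m c xs ht, hns, mul_assoc]
    exact mul_le_mul_of_nonneg_left (hC t ht) (norm_nonneg c)
  have memsub : ∀ xs ys : X →L[ℂ] ℂ, MemLambda T β xs → MemLambda T β ys →
      MemLambda T β (xs - ys) := by
    intro xs ys hx hy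
    have h := memadd xs ((-1 : ℂ) • ys) hx (memsmul (-1) ys hy)
    rw [sub_eq_add_neg, ← neg_one_smul ℂ ys]
    exact h
  refine ⟨mem0, memadd, memsmul, ?_, ?_, ?_, ?_⟩
  · -- norm zero iff zero
    intro xs _
    constructor
    · intro h
      have h1 : ‖xs‖ = 0 := le_antisymm (by
        have := hmono xs; linarith [hsupnonneg xs, hlam xs ▸ h]) (norm_nonneg _)
      exact norm_eq_zero.mp h1
    · rintro rfl
      rw [hlam]
      have hz : ∀ t : Set.Ioi (0:ℝ), F (0 : X →L[ℂ] ℂ) t = 0 := by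
        intro t
        rw [hF]
        simp only [dualDeriv_zero' T hsm m t.2, norm_zero, mul_zero]
      have : (⨆ t : Set.Ioi (0:ℝ), F (0 : X →L[ℂ] ℂ) t) = 0 :=
        le_antisymm (Real.iSup_le (fun t => le_of_eq (hz t)) le_rfl)
          (hsupnonneg 0)
      simp [this]
  · -- homogeneity
    intro c xs _
    have hFs : ∀ t : Set.Ioi (0:ℝ), F (c • xs) t = ‖c‖ * F xs t := by
      intro t
      simp only [hF]
      rw [dualDeriv_smul' T hsm m c xs t.2, hns]
      ring
    rw [hlam, hlam, hns]
    have : (⨆ t : Set.Ioi (0:ℝ), F (c • xs) t) = ‖c‖ * ⨆ t : Set.Ioi (0:ℝ), F xs t := by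
      rw [Real.mul_iSup_of_nonneg (norm_nonneg c)]
      exact iSup_congr hFs
    rw [this]; ring
  · -- triangle inequality
    intro xs ys hx hy
    rw [hlam, hlam, hlam]
    have hsup : (⨆ t : Set.Ioi (0:ℝ), F (xs + ys) t) ≤
        (⨆ t : Set.Ioi (0:ℝ), F xs t) + ⨆ t : Set.Ioi (0:ℝ), F ys t := by
      refine Real.iSup_le (fun t => ?_) (add_nonneg (hsupnonneg xs) (hsupnonneg ys))
      have h1 : F (xs + ys) t ≤ F xs t + F ys t := by
        rw [hF]
        simp only [dualDeriv_add' T hsm m xs ys t.2]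
        calc (t:ℝ) ^ ((m:ℝ) - β) * ‖dualDeriv T m xs t + dualDeriv T m ys t‖
            ≤ (t:ℝ) ^ ((m:ℝ) - β) * (‖dualDeriv T m xs t‖ + ‖dualDeriv T m ys t‖) :=
              mul_le_mul_of_nonneg_left (norm_add_le _ _)
                (le_of_lt (hrpos t t.2))
          _ = (t:ℝ) ^ ((m:ℝ) - β) * ‖dualDeriv T m xs t‖ +
              (t:ℝ) ^ ((m:ℝ) - β) * ‖dualDeriv T m ys t‖ := by ring
      exact h1.trans (add_le_add (le_ciSup (hbdd hx) t) (le_ciSup (hbdd hy) t))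
    have := add_le_add (norm_add_le xs ys) hsup
    linarith
  · -- completeness
    intro f hmem hC
    have hsubmem : ∀ p q : ℕ, MemLambda T β (f p - f q) :=
      fun p q => memsub _ _ (hmem p) (hmem q)
    -- f is Cauchy in X*
    have hcauchy : CauchySeq f := by
      rw [Metric.cauchySeq_iff]
      intro ε hε
      obtain ⟨N, hN⟩ := hC ε hε
      refine ⟨N, fun p hp q hq => ?_⟩
      rw [dist_eq_norm]
      exact lt_of_le_of_lt (hmono _) (hN p q hp hq)
    obtain ⟨g, hg⟩ := cauchySeq_tendsto_of_complete hcauchy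
    have hnorm0 : Tendsto (fun q => ‖f q - g‖) atTop (𝓝 0) := by
      have := (hg.sub (tendsto_const_nhds (x := g))).norm
      simpa using this
    -- key uniform estimate
    have hkey : ∀ ε : ℝ, 0 < ε → ∃ N : ℕ, ∀ p : ℕ, N ≤ p → ∀ t : ℝ, 0 < t →
        F (f p - g) t ≤ ε := by
      intro ε hε
      obtain ⟨N, hN⟩ := hC (ε/2) (by linarith)
      refine ⟨N, fun p hp t ht => ?_⟩
      set K : ℝ := t ^ ((m:ℝ) - β) * ‖iteratedDerivWithin m T (Set.Ioi 0) t‖ with hK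
      have hKnn : 0 ≤ K := mul_nonneg (le_of_lt (hrpos t ht)) (norm_nonneg _)
      set δ : ℝ := ε / (2 * (K + 1)) with hδ
      have hδpos : 0 < δ := by positivity
      obtain ⟨N', hN'⟩ := (Metric.tendsto_atTop.mp hnorm0) δ hδpos
      set q : ℕ := max N N' with hq
      have hq1 : N ≤ q := le_max_left _ _
      have hq2 : N' ≤ q := le_max_right _ _
      have hdist : ‖f q - g‖ < δ := by
        have := hN' q hq2
        rwa [Real.dist_eq, sub_zero, abs_of_nonneg (norm_nonneg _)] at this
      -- F (f p - f q) t ≤ ε/2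
      have h1 : F (f p - f q) t ≤ ε/2 := by
        have hle : F (f p - f q) t ≤ ⨆ s : Set.Ioi (0:ℝ), F (f p - f q) s :=
          le_ciSup (hbdd (hsubmem p q)) (⟨t, ht⟩ : Set.Ioi (0:ℝ))
        have := (hsuple (f p - f q)).trans (le_of_lt (hN p q hp hq1))
        linarith
      -- error term
      have h2 : ‖dualDeriv T m (f q - g) t‖ ≤
          ‖f q - g‖ * ‖iteratedDerivWithin m T (Set.Ioi 0) t‖ :=
        dualDeriv_norm_le T hsm m _ ht
      have hsplit : dualDeriv T m (f p - g) t =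
          dualDeriv T m (f p - f q) t + dualDeriv T m (f q - g) t := by
        have : f p - g = (f p - f q) + (f q - g) := by abel
        rw [this, dualDeriv_add' T hsm m _ _ ht]
      have h3 : F (f p - g) t ≤ F (f p - f q) t +
          t ^ ((m:ℝ) - β) * ‖dualDeriv T m (f q - g) t‖ := by
        rw [hF]
        simp only [hsplit]
        calc t ^ ((m:ℝ) - β) * ‖dualDeriv T m (f p - f q) t + dualDeriv T m (f q - g) t‖
            ≤ t ^ ((m:ℝ) - β) * (‖dualDeriv T m (f p - f q) t‖ + ‖dualDeriv T m (f q - g) t‖) :=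
              mul_le_mul_of_nonneg_left (norm_add_le _ _) (le_of_lt (hrpos t ht))
          _ = t ^ ((m:ℝ) - β) * ‖dualDeriv T m (f p - f q) t‖ +
              t ^ ((m:ℝ) - β) * ‖dualDeriv T m (f q - g) t‖ := by ring
      have h4 : t ^ ((m:ℝ) - β) * ‖dualDeriv T m (f q - g) t‖ ≤ K * δ := by
        calc t ^ ((m:ℝ) - β) * ‖dualDeriv T m (f q - g) t‖
            ≤ t ^ ((m:ℝ) - β) * (‖f q - g‖ * ‖iteratedDerivWithin m T (Set.Ioi 0) t‖) :=
              mul_le_mul_of_nonneg_left h2 (le_of_lt (hrpos t ht))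
          _ = K * ‖f q - g‖ := by rw [hK]; ring
          _ ≤ K * δ := mul_le_mul_of_nonneg_left hdist.le hKnn
      have h5 : K * δ ≤ ε / 2 := by
        have h2K : (0:ℝ) < 2 * (K + 1) := by positivity
        rw [hδ, mul_div_assoc', div_le_div_iff₀ h2K (by norm_num : (0:ℝ) < 2)]
        nlinarith [hε.le, hKnn]
      linarith
    -- g is in the space
    obtain ⟨N0, hN0⟩ := hkey 1 one_pos
    have hgmem : MemLambda T β g := by
      have hmemdiff : MemLambda T β (f N0 - g) :=
        ⟨1, hFrev (fun t ht => hN0 N0 le_rfl t ht)⟩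
      have : g = f N0 - (f N0 - g) := by abel
      rw [this]
      exact memsub _ _ (hmem N0) hmemdiff
    refine ⟨g, hgmem, ?_⟩
    -- convergence in the lambda norm
    rw [Metric.tendsto_atTop]
    intro ε hε
    obtain ⟨N1, hN1⟩ := hkey (ε/4) (by linarith)
    obtain ⟨N2, hN2⟩ := (Metric.tendsto_atTop.mp hnorm0) (ε/2) (by linarith)
    refine ⟨max N1 N2, fun k hk => ?_⟩
    have hk1 : N1 ≤ k := le_trans (le_max_left _ _) hk
    have hk2 : N2 ≤ k := le_trans (le_max_right _ _) hk
    have hd : ‖f k - g‖ < ε/2 := by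
      have := hN2 k hk2
      rwa [Real.dist_eq, sub_zero, abs_of_nonneg (norm_nonneg _)] at this
    have hsup : (⨆ t : Set.Ioi (0:ℝ), F (f k - g) t) ≤ ε/4 :=
      Real.iSup_le (fun t => hN1 k hk1 t t.2) (by linarith)
    have hval : lambdaNorm T β (f k - g) < ε := by
      rw [hlam]
      linarith
    rw [Real.dist_eq, sub_zero, abs_of_nonneg (hlamnonneg _)]
    exact hval
end
end

section
/- Let β > 0 and let n > m > β be integers, and let x* ∈ X*. Then the two conditions '‖(d/dt)^m T_t* x*‖_{X*} ≤ C_m t^{β−m} for all t > 0' and '‖(d/dt)^n T_t* x*‖_{X*} ≤ C_n t^{β−n} for all t > 0' are equivalent (one holds for some finite constant iff the other does). Moreover there is a constant C > 1, depending on m and n (and on the semigroup) but independent of x*, such that the smallest constants C_m, C_n for which the respective inequalities hold satisfy C^{−1} C_m ≤ C_n ≤ C C_m. -/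
open Filter Topology MeasureTheory Set

noncomputable section

variable {X : Type*} [NormedAddCommGroup X] [NormedSpace ℂ X] [CompleteSpace X]

namespace HoloAux

set_option linter.unusedSectionVars false

variable {T : ℝ → X →L[ℂ] X}

/-- `k`-th derivative of the semigroup. -/
def G (T : ℝ → X →L[ℂ] X) (k : ℕ) : ℝ → X →L[ℂ] X :=
  iteratedDerivWithin k T (Set.Ioi 0)

lemma hasDerivAt_G (hT : IsHoloSG T) (k : ℕ) {t : ℝ} (ht : 0 < t) :
    HasDerivAt (G T k) (G T (k + 1) t) t := by
  have hd : DifferentiableOn ℝ (G T k) (Set.Ioi 0) :=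
    hT.smooth.differentiableOn_iteratedDerivWithin
      (by exact_mod_cast WithTop.coe_lt_top k) (uniqueDiffOn_Ioi 0)
  have hw := (hd t ht).hasDerivWithinAt
  rw [show derivWithin (G T k) (Set.Ioi 0) t = G T (k + 1) t from
    (congrFun iteratedDerivWithin_succ t).symm] at hw
  exact hw.hasDerivAt (Ioi_mem_nhds ht)

lemma continuousOn_G (hT : IsHoloSG T) (k : ℕ) : ContinuousOn (G T k) (Set.Ioi 0) :=
  hT.smooth.continuousOn_iteratedDerivWithin (by exact_mod_cast le_top) (uniqueDiffOn_Ioi 0)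

/-- Left composition with a fixed functional, as an ℝ-linear CLM. -/
def Lc (xs : X →L[ℂ] ℂ) : (X →L[ℂ] X) →L[ℝ] (X →L[ℂ] ℂ) :=
  ((ContinuousLinearMap.compL ℂ X X ℂ) xs).restrictScalars ℝ

/-- Left composition with a fixed operator, as an ℝ-linear CLM. -/
def LcO (B : X →L[ℂ] X) : (X →L[ℂ] X) →L[ℝ] (X →L[ℂ] X) :=
  ((ContinuousLinearMap.compL ℂ X X X) B).restrictScalars ℝ

/-- Evaluation at a fixed vector, as an ℝ-linear CLM. -/
def Ev (x : X) : (X →L[ℂ] X) →L[ℝ] X :=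
  ((ContinuousLinearMap.apply ℂ X x)).restrictScalars ℝ

lemma dualDeriv_eq (hT : IsHoloSG T) (k : ℕ) (xs : X →L[ℂ] ℂ) {t : ℝ} (ht : 0 < t) :
    dualDeriv T k xs t = xs.comp (G T k t) := by
  induction k generalizing t with
  | zero => simp [dualDeriv, G, iteratedDerivWithin_zero]
  | succ k ih =>
    have hUD := (uniqueDiffOn_Ioi (0:ℝ)) t ht
    rw [dualDeriv, iteratedDerivWithin_succ]
    have hcongr : derivWithin (iteratedDerivWithin k (fun s => xs.comp (T s)) (Set.Ioi 0))
        (Set.Ioi 0) t = derivWithin (fun s => xs.comp (G T k s)) (Set.Ioi 0) t := by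
      apply derivWithin_congr
      · intro y hy; exact ih hy
      · exact ih ht
    rw [hcongr]
    have h : HasDerivAt (fun s => xs.comp (G T k s)) (xs.comp (G T (k + 1) t)) t := by
      have := (Lc xs).hasFDerivAt.comp_hasDerivAt t (hasDerivAt_G hT k ht)
      exact this
    exact h.hasDerivWithinAt.derivWithin hUD

lemma G_split (hT : IsHoloSG T) (k j : ℕ) {a : ℝ} (ha : 0 < a) :
    ∀ s : ℝ, 0 < s → G T (k + j) (a + s) = (G T k a).comp (G T j s) := by
  induction j with
  | zero =>
    intro s hs
    simpa [G, iteratedDerivWithin_zero] using hT.derivComp k s a hs ha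
  | succ j ih =>
    intro s hs
    have hL : HasDerivAt (fun s => G T (k + j) (a + s)) (G T (k + j + 1) (a + s)) s :=
      (hasDerivAt_G hT (k + j) (by linarith)).comp_const_add a s
    have hR : HasDerivAt (fun s => (G T k a).comp (G T j s))
        ((G T k a).comp (G T (j + 1) s)) s :=
      (LcO (G T k a)).hasFDerivAt.comp_hasDerivAt s (hasDerivAt_G hT j hs)
    have hEq : (fun s => G T (k + j) (a + s)) =ᶠ[𝓝 s] (fun s => (G T k a).comp (G T j s)) := by
      filter_upwards [Ioi_mem_nhds hs] with u hu
      exact ih u hu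
    have hL' : HasDerivAt (fun s => (G T k a).comp (G T j s)) (G T (k + j + 1) (a + s)) s :=
      (hEq.hasDerivAt_iff).1 hL
    exact hL'.unique hR

/-- Upward estimate: from level `m` to level `n`. -/
lemma up (hT : IsHoloSG T) (β : ℝ) (m n : ℕ) (hmn : m < n) :
    ∃ K : ℝ, 0 < K ∧ ∀ (xs : X →L[ℂ] ℂ) (D : ℝ),
      (∀ t : ℝ, 0 < t → ‖dualDeriv T m xs t‖ ≤ D * t ^ (β - (m : ℝ))) →
      ∀ t : ℝ, 0 < t → ‖dualDeriv T n xs t‖ ≤ D * K * t ^ (β - (n : ℝ)) := by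
  obtain ⟨C0, hC0, hB⟩ := hT.derivBound
  refine ⟨C0 ^ (n - m) * 2 ^ ((n : ℝ) - β), by positivity, ?_⟩
  intro xs D hD t ht
  have hD0 : 0 ≤ D := by
    have := hD 1 one_pos
    have h0 : (0:ℝ) ≤ D * (1:ℝ) ^ (β - (m : ℝ)) := le_trans (norm_nonneg _) this
    simpa using h0
  have ht2 : 0 < t / 2 := by linarith
  have hsplit : G T n t = (G T m (t / 2)).comp (G T (n - m) (t / 2)) := by
    have := G_split hT m (n - m) ht2 (t / 2) ht2
    rw [show m + (n - m) = n by omega, show t / 2 + t / 2 = t by ring] at this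
    exact this
  have heq : dualDeriv T n xs t = (dualDeriv T m xs (t / 2)).comp (G T (n - m) (t / 2)) := by
    rw [dualDeriv_eq hT n xs ht, hsplit, dualDeriv_eq hT m xs ht2, ContinuousLinearMap.comp_assoc]
  have hc : ((n - m : ℕ) : ℝ) = (n:ℝ) - (m:ℝ) := by
    rw [Nat.cast_sub hmn.le]
  rw [heq]
  calc ‖(dualDeriv T m xs (t / 2)).comp (G T (n - m) (t / 2))‖
      ≤ ‖dualDeriv T m xs (t / 2)‖ * ‖G T (n - m) (t / 2)‖ := ContinuousLinearMap.opNorm_comp_le _ _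
    _ ≤ (D * (t / 2) ^ (β - (m : ℝ))) * (C0 ^ (n - m) / (t / 2) ^ (n - m)) :=
        mul_le_mul (hD _ ht2) (hB (n - m) (by omega) _ ht2) (norm_nonneg _) (by positivity)
    _ = D * (C0 ^ (n - m)) * ((t / 2) ^ (β - (m : ℝ)) * (t / 2) ^ (-((n : ℝ) - (m : ℝ)))) := by
        rw [div_eq_mul_inv (C0 ^ (n - m)), ← Real.rpow_natCast (t / 2) (n - m), hc,
          ← Real.rpow_neg ht2.le]
        ring
    _ = D * (C0 ^ (n - m)) * (t / 2) ^ (β - (n : ℝ)) := by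
        rw [← Real.rpow_add ht2]
        ring_nf
    _ = D * (C0 ^ (n - m) * 2 ^ ((n : ℝ) - β)) * t ^ (β - (n : ℝ)) := by
        rw [Real.div_rpow ht.le (by norm_num : (0:ℝ) ≤ 2), div_eq_mul_inv,
          ← Real.rpow_neg (by norm_num : (0:ℝ) ≤ 2), neg_sub]
        ring

/-- Single downward step: from level `j+1` to level `j`. -/
lemma down_one (hT : IsHoloSG T) (β : ℝ) (j : ℕ) (hj : 1 ≤ j) (hβj : β < (j : ℝ))
    (xs : X →L[ℂ] ℂ) (D : ℝ) (hD : 0 ≤ D)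
    (h : ∀ t : ℝ, 0 < t → ‖dualDeriv T (j + 1) xs t‖ ≤ D * t ^ (β - ((j : ℝ) + 1))) :
    ∀ t : ℝ, 0 < t → ‖dualDeriv T j xs t‖ ≤ D * ((j : ℝ) - β)⁻¹ * t ^ (β - (j : ℝ)) := by
  obtain ⟨C0, hC0, hB⟩ := hT.derivBound
  intro t ht
  have hjβ : 0 < (j : ℝ) - β := by linarith
  apply ContinuousLinearMap.opNorm_le_bound _ (by positivity)
  intro x
  have hf' : ∀ s : ℝ, 0 < s →
      HasDerivAt (fun s => xs ((G T j s) x)) (xs ((G T (j + 1) s) x)) s := by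
    intro s hs
    have h1 : HasDerivAt (fun s => (G T j s) x) ((G T (j + 1) s) x) s :=
      (Ev x).hasFDerivAt.comp_hasDerivAt s (hasDerivAt_G hT j hs)
    exact (xs.restrictScalars ℝ).hasFDerivAt.comp_hasDerivAt s h1
  have key : ∀ R : ℝ, t ≤ R →
      ‖xs ((G T j t) x)‖ ≤ ‖xs‖ * (C0 ^ j / R ^ j) * ‖x‖
        + D * ‖x‖ * (t ^ (β - (j : ℝ)) / ((j : ℝ) - β)) := by
    intro R hR
    have hRpos : 0 < R := lt_of_lt_of_le ht hR
    have hIcc : Set.uIcc t R ⊆ Set.Ioi 0 := by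
      rw [Set.uIcc_of_le hR]
      intro y hy; exact lt_of_lt_of_le ht hy.1
    have hcont : ContinuousOn (fun s => xs ((G T (j + 1) s) x)) (Set.uIcc t R) :=
      xs.continuous.comp_continuousOn
        (((continuousOn_G hT (j + 1)).mono hIcc).clm_apply continuousOn_const)
    have hFTC : ∫ s in t..R, xs ((G T (j + 1) s) x)
        = xs ((G T j R) x) - xs ((G T j t) x) := by
      apply intervalIntegral.integral_eq_sub_of_hasDerivAt
      · intro s hs; exact hf' s (hIcc hs)
      · exact hcont.intervalIntegrable
    have hInt1 : IntervalIntegrable (fun s => ‖xs ((G T (j + 1) s) x)‖) volume t R :=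
      hcont.norm.intervalIntegrable
    have hInt2 : IntervalIntegrable (fun s => D * ‖x‖ * s ^ (β - ((j : ℝ) + 1))) volume t R := by
      apply ContinuousOn.intervalIntegrable
      apply ContinuousOn.mul continuousOn_const
      exact ContinuousOn.rpow_const continuousOn_id
        (fun y hy => Or.inl (ne_of_gt (hIcc hy)))
    have hbound : ∫ s in t..R, ‖xs ((G T (j + 1) s) x)‖
        ≤ ∫ s in t..R, D * ‖x‖ * s ^ (β - ((j : ℝ) + 1)) := by
      apply intervalIntegral.integral_mono_on hR hInt1 hInt2
      intro s hs
      have hs0 : 0 < s := lt_of_lt_of_le ht hs.1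
      calc ‖xs ((G T (j + 1) s) x)‖ = ‖(dualDeriv T (j + 1) xs s) x‖ := by
            rw [dualDeriv_eq hT (j + 1) xs hs0]; rfl
        _ ≤ ‖dualDeriv T (j + 1) xs s‖ * ‖x‖ := ContinuousLinearMap.le_opNorm _ _
        _ ≤ (D * s ^ (β - ((j : ℝ) + 1))) * ‖x‖ :=
            mul_le_mul_of_nonneg_right (h s hs0) (norm_nonneg _)
        _ = D * ‖x‖ * s ^ (β - ((j : ℝ) + 1)) := by ring
    have hexp : β - ((j : ℝ) + 1) + 1 = β - (j : ℝ) := by ring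
    have hside : (-1 < β - ((j : ℝ) + 1)) ∨
        (β - ((j : ℝ) + 1) ≠ -1 ∧ (0:ℝ) ∉ Set.uIcc t R) := by
      right
      constructor
      · intro hc; linarith
      · intro hc
        rw [Set.uIcc_of_le hR] at hc
        linarith [hc.1]
    have hval : ∫ s in t..R, D * ‖x‖ * s ^ (β - ((j : ℝ) + 1))
        = D * ‖x‖ * ((R ^ (β - (j : ℝ)) - t ^ (β - (j : ℝ))) / (β - (j : ℝ))) := by
      rw [intervalIntegral.integral_const_mul, integral_rpow hside, hexp]
    have hineq : ‖xs ((G T j t) x)‖ ≤ ‖xs ((G T j R) x)‖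
        + D * ‖x‖ * ((R ^ (β - (j : ℝ)) - t ^ (β - (j : ℝ))) / (β - (j : ℝ))) := by
      have h1 : ‖xs ((G T j t) x)‖ - ‖xs ((G T j R) x)‖
          ≤ ‖xs ((G T j R) x) - xs ((G T j t) x)‖ := by
        rw [norm_sub_rev]
        exact norm_sub_norm_le _ _
      have h2 : ‖xs ((G T j R) x) - xs ((G T j t) x)‖
          ≤ ∫ s in t..R, ‖xs ((G T (j + 1) s) x)‖ := by
        rw [← hFTC]
        exact intervalIntegral.norm_integral_le_integral_norm hR
      linarith [le_trans h2 (le_of_le_of_eq hbound hval)]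
    have hRterm : ‖xs ((G T j R) x)‖ ≤ ‖xs‖ * (C0 ^ j / R ^ j) * ‖x‖ := by
      calc ‖xs ((G T j R) x)‖ ≤ ‖xs‖ * ‖(G T j R) x‖ := xs.le_opNorm _
        _ ≤ ‖xs‖ * (‖G T j R‖ * ‖x‖) :=
            mul_le_mul_of_nonneg_left ((G T j R).le_opNorm x) (norm_nonneg _)
        _ ≤ ‖xs‖ * ((C0 ^ j / R ^ j) * ‖x‖) := by
            apply mul_le_mul_of_nonneg_left _ (norm_nonneg _)
            exact mul_le_mul_of_nonneg_right (hB j hj R hRpos) (norm_nonneg _)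
        _ = ‖xs‖ * (C0 ^ j / R ^ j) * ‖x‖ := by ring
    have hlast : D * ‖x‖ * ((R ^ (β - (j : ℝ)) - t ^ (β - (j : ℝ))) / (β - (j : ℝ)))
        ≤ D * ‖x‖ * (t ^ (β - (j : ℝ)) / ((j : ℝ) - β)) := by
      apply mul_le_mul_of_nonneg_left _ (by positivity)
      have hRp : (0:ℝ) ≤ R ^ (β - (j : ℝ)) := Real.rpow_nonneg hRpos.le _
      have h1 : ((j : ℝ) - β) ≠ 0 := ne_of_gt hjβ
      have h2 : (β - (j : ℝ)) ≠ 0 := fun hc => h1 (by linarith)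
      have key2 : (R ^ (β - (j : ℝ)) - t ^ (β - (j : ℝ))) / (β - (j : ℝ))
          = (t ^ (β - (j : ℝ)) - R ^ (β - (j : ℝ))) / ((j : ℝ) - β) := by
        field_simp
        ring
      rw [key2]
      exact div_le_div_of_nonneg_right (by linarith) hjβ.le
    linarith
  have hlim : Tendsto (fun R : ℝ => ‖xs‖ * (C0 ^ j / R ^ j) * ‖x‖
      + D * ‖x‖ * (t ^ (β - (j : ℝ)) / ((j : ℝ) - β))) atTop
      (𝓝 (0 + D * ‖x‖ * (t ^ (β - (j : ℝ)) / ((j : ℝ) - β)))) := by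
    apply Tendsto.add _ tendsto_const_nhds
    have h0 : Tendsto (fun R : ℝ => C0 ^ j / R ^ j) atTop (𝓝 0) :=
      Tendsto.div_atTop tendsto_const_nhds (tendsto_pow_atTop (by omega))
    have := (h0.const_mul ‖xs‖).mul_const ‖x‖
    simpa using this
  have hle : ‖xs ((G T j t) x)‖ ≤ 0 + D * ‖x‖ * (t ^ (β - (j : ℝ)) / ((j : ℝ) - β)) := by
    apply ge_of_tendsto hlim
    filter_upwards [eventually_ge_atTop t] with R hR
    exact key R hR
  calc ‖(dualDeriv T j xs t) x‖ = ‖xs ((G T j t) x)‖ := by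
        rw [dualDeriv_eq hT j xs ht]; rfl
    _ ≤ 0 + D * ‖x‖ * (t ^ (β - (j : ℝ)) / ((j : ℝ) - β)) := hle
    _ = D * ((j : ℝ) - β)⁻¹ * t ^ (β - (j : ℝ)) * ‖x‖ := by
        field_simp
        ring

/-- Downward estimate: from level `n` to level `m < n`. -/
lemma down (hT : IsHoloSG T) (β : ℝ) (hβ : 0 < β) (m n : ℕ) (hβm : β < (m : ℝ)) (hmn : m < n) :
    ∃ K : ℝ, 0 < K ∧ ∀ (xs : X →L[ℂ] ℂ) (D : ℝ), 0 ≤ D →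
      (∀ t : ℝ, 0 < t → ‖dualDeriv T n xs t‖ ≤ D * t ^ (β - (n : ℝ))) →
      ∀ t : ℝ, 0 < t → ‖dualDeriv T m xs t‖ ≤ D * K * t ^ (β - (m : ℝ)) := by
  have hm1 : 1 ≤ m := by
    rcases Nat.eq_zero_or_pos m with h | h
    · subst h; norm_num at hβm; linarith
    · exact h
  obtain ⟨d, rfl⟩ : ∃ d, n = m + (d + 1) := ⟨n - m - 1, by omega⟩
  clear hmn
  induction d with
  | zero =>
    refine ⟨((m : ℝ) - β)⁻¹, inv_pos.2 (by linarith), ?_⟩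
    intro xs D hD h
    have h' : ∀ t : ℝ, 0 < t → ‖dualDeriv T (m + 1) xs t‖ ≤ D * t ^ (β - ((m : ℝ) + 1)) := by
      intro t ht
      have := h t ht
      rw [show β - ((m : ℝ) + 1) = β - ((m + (0 + 1) : ℕ) : ℝ) by push_cast; ring]
      exact this
    exact down_one hT β m hm1 hβm xs D hD h'
  | succ d ih =>
    obtain ⟨K, hK, hKp⟩ := ih
    have hpos : (0:ℝ) < (m : ℝ) + (d : ℝ) + 1 - β := by linarith
    refine ⟨((m : ℝ) + (d : ℝ) + 1 - β)⁻¹ * K, by positivity, ?_⟩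
    intro xs D hD h
    have hβmd : β < ((m + (d + 1) : ℕ) : ℝ) := by push_cast; linarith
    have h' : ∀ t : ℝ, 0 < t → ‖dualDeriv T ((m + (d + 1)) + 1) xs t‖
        ≤ D * t ^ (β - (((m + (d + 1) : ℕ)) : ℝ) - 1) := by
      intro t ht
      have := h t ht
      rw [show (m + (d + 1)) + 1 = m + (d + 1 + 1) from by omega]
      rw [show β - (((m + (d + 1) : ℕ)) : ℝ) - 1 = β - ((m + (d + 1 + 1) : ℕ) : ℝ) by
        push_cast; ring]
      exact this
    have hstep := down_one hT β (m + (d + 1)) (by omega) hβmd xs D hD (by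
      intro t ht
      have := h' t ht
      rw [show β - (((m + (d + 1) : ℕ)) : ℝ) - 1 = β - (((m + (d + 1) : ℕ)) : ℝ) + (-1) by ring]
        at this
      convert this using 3
      ring)
    have hpos2 : (0:ℝ) < (((m + (d + 1) : ℕ)) : ℝ) - β := by
      push_cast; linarith
    have hIH := hKp xs (D * ((((m + (d + 1) : ℕ)) : ℝ) - β)⁻¹)
      (mul_nonneg hD (inv_nonneg.2 hpos2.le)) hstep
    intro t ht
    calc ‖dualDeriv T m xs t‖
        ≤ D * ((((m + (d + 1) : ℕ)) : ℝ) - β)⁻¹ * K * t ^ (β - (m : ℝ)) := hIH t ht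
      _ = D * (((m : ℝ) + (d : ℝ) + 1 - β)⁻¹ * K) * t ^ (β - (m : ℝ)) := by
          rw [show (((m + (d + 1) : ℕ)) : ℝ) - β = (m : ℝ) + (d : ℝ) + 1 - β by push_cast; ring]
          ring

end HoloAux

open HoloAux

/-- for integers `n > m > β`, the conditions
`‖(d/dt)^m T_t* x*‖ ≤ C_m t^{β-m}` and `‖(d/dt)^n T_t* x*‖ ≤ C_n t^{β-n}` are
equivalent, and the smallest admissible constants (realized as the suprema of
`t^{m-β}‖(d/dt)^m T_t* x*‖`, resp. `t^{n-β}‖(d/dt)^n T_t* x*‖`, over `t > 0`)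
are comparable, with a comparison constant independent of `x*`. -/
theorem stmt1 (T : ℝ → X →L[ℂ] X) (hT : IsHoloSG T) (β : ℝ) (hβ : 0 < β)
    (m n : ℕ) (hβm : β < (m : ℝ)) (hmn : m < n) :
    ∃ C : ℝ, 1 < C ∧ ∀ xs : X →L[ℂ] ℂ,
      ((∃ Cm : ℝ, ∀ t : ℝ, 0 < t →
          ‖dualDeriv T m xs t‖ ≤ Cm * t ^ (β - (m : ℝ))) ↔
       (∃ Cn : ℝ, ∀ t : ℝ, 0 < t →
          ‖dualDeriv T n xs t‖ ≤ Cn * t ^ (β - (n : ℝ)))) ∧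
      ((∃ Cm : ℝ, ∀ t : ℝ, 0 < t →
          ‖dualDeriv T m xs t‖ ≤ Cm * t ^ (β - (m : ℝ))) →
        (C⁻¹ * (⨆ t : Set.Ioi (0:ℝ), (t : ℝ) ^ ((m : ℝ) - β) * ‖dualDeriv T m xs t‖)
            ≤ ⨆ t : Set.Ioi (0:ℝ), (t : ℝ) ^ ((n : ℝ) - β) * ‖dualDeriv T n xs t‖) ∧
        ((⨆ t : Set.Ioi (0:ℝ), (t : ℝ) ^ ((n : ℝ) - β) * ‖dualDeriv T n xs t‖)
            ≤ C * ⨆ t : Set.Ioi (0:ℝ), (t : ℝ) ^ ((m : ℝ) - β) * ‖dualDeriv T m xs t‖)) := by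
  obtain ⟨K1, hK1, hup⟩ := up hT β m n hmn
  obtain ⟨K2, hK2, hdown⟩ := down hT β hβ m n hβm hmn
  haveI : Nonempty (Set.Ioi (0:ℝ)) := ⟨⟨1, by norm_num⟩⟩
  refine ⟨1 + K1 + K2, by linarith, ?_⟩
  intro xs
  constructor
  · constructor
    · rintro ⟨Cm, hCm⟩
      exact ⟨Cm * K1, hup xs Cm hCm⟩
    · rintro ⟨Cn, hCn⟩
      have hCn0 : 0 ≤ Cn := by
        have := hCn 1 one_pos
        have h0 : (0:ℝ) ≤ Cn * (1:ℝ) ^ (β - (n : ℝ)) := le_trans (norm_nonneg _) this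
        simpa using h0
      exact ⟨Cn * K2, hdown xs Cn hCn0 hCn⟩
  · rintro ⟨Cm, hCm⟩
    set Fm : Set.Ioi (0:ℝ) → ℝ := fun t => (t : ℝ) ^ ((m : ℝ) - β) * ‖dualDeriv T m xs t‖ with hFm
    set Fn : Set.Ioi (0:ℝ) → ℝ := fun t => (t : ℝ) ^ ((n : ℝ) - β) * ‖dualDeriv T n xs t‖ with hFn
    have hrpow_cancel : ∀ (k : ℕ) (t : ℝ), 0 < t →
        t ^ ((k : ℝ) - β) * t ^ (β - (k : ℝ)) = 1 := by
      intro k t ht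
      rw [← Real.rpow_add ht]
      norm_num
    have hbddm : BddAbove (Set.range Fm) := by
      refine ⟨Cm, ?_⟩
      rintro _ ⟨⟨t, ht⟩, rfl⟩
      have := hCm t ht
      calc Fm ⟨t, ht⟩ ≤ t ^ ((m : ℝ) - β) * (Cm * t ^ (β - (m : ℝ))) :=
            mul_le_mul_of_nonneg_left this (Real.rpow_nonneg (le_of_lt ht) _)
        _ = Cm * (t ^ ((m : ℝ) - β) * t ^ (β - (m : ℝ))) := by ring
        _ = Cm := by rw [hrpow_cancel m t ht, mul_one]
    have hSm_adm : ∀ t : ℝ, 0 < t → ‖dualDeriv T m xs t‖ ≤ (⨆ s, Fm s) * t ^ (β - (m : ℝ)) := by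
      intro t ht
      have h1 : Fm ⟨t, ht⟩ ≤ ⨆ s, Fm s := le_ciSup hbddm _
      have h2 : t ^ (β - (m : ℝ)) * Fm ⟨t, ht⟩ ≤ t ^ (β - (m : ℝ)) * (⨆ s, Fm s) :=
        mul_le_mul_of_nonneg_left h1 (Real.rpow_nonneg ht.le _)
      calc ‖dualDeriv T m xs t‖
          = t ^ (β - (m : ℝ)) * (t ^ ((m : ℝ) - β) * ‖dualDeriv T m xs t‖) := by
            rw [← mul_assoc, mul_comm (t ^ (β - (m : ℝ))), hrpow_cancel m t ht, one_mul]
        _ ≤ t ^ (β - (m : ℝ)) * (⨆ s, Fm s) := h2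
        _ = (⨆ s, Fm s) * t ^ (β - (m : ℝ)) := by ring
    have hSm_nonneg : 0 ≤ ⨆ s, Fm s := by
      have := le_ciSup hbddm (⟨1, by norm_num⟩ : Set.Ioi (0:ℝ))
      refine le_trans ?_ this
      exact mul_nonneg (Real.rpow_nonneg (by norm_num) _) (norm_nonneg _)
    have hn_bound : ∀ t : ℝ, 0 < t →
        ‖dualDeriv T n xs t‖ ≤ (⨆ s, Fm s) * K1 * t ^ (β - (n : ℝ)) :=
      hup xs _ hSm_adm
    have hFn_le : ∀ s : Set.Ioi (0:ℝ), Fn s ≤ (⨆ s, Fm s) * K1 := by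
      rintro ⟨t, ht⟩
      have := hn_bound t ht
      calc Fn ⟨t, ht⟩ ≤ t ^ ((n : ℝ) - β) * ((⨆ s, Fm s) * K1 * t ^ (β - (n : ℝ))) :=
            mul_le_mul_of_nonneg_left this (Real.rpow_nonneg ht.le _)
        _ = (⨆ s, Fm s) * K1 * (t ^ ((n : ℝ) - β) * t ^ (β - (n : ℝ))) := by ring
        _ = (⨆ s, Fm s) * K1 := by rw [hrpow_cancel n t ht, mul_one]
    have hbddn : BddAbove (Set.range Fn) := by
      refine ⟨(⨆ s, Fm s) * K1, ?_⟩
      rintro _ ⟨s, rfl⟩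
      exact hFn_le s
    have hSn_le : (⨆ s, Fn s) ≤ (⨆ s, Fm s) * K1 := ciSup_le hFn_le
    have hSn_nonneg : 0 ≤ ⨆ s, Fn s := by
      have := le_ciSup hbddn (⟨1, by norm_num⟩ : Set.Ioi (0:ℝ))
      refine le_trans ?_ this
      exact mul_nonneg (Real.rpow_nonneg (by norm_num) _) (norm_nonneg _)
    have hSn_adm : ∀ t : ℝ, 0 < t → ‖dualDeriv T n xs t‖ ≤ (⨆ s, Fn s) * t ^ (β - (n : ℝ)) := by
      intro t ht
      have h1 : Fn ⟨t, ht⟩ ≤ ⨆ s, Fn s := le_ciSup hbddn _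
      have h2 : t ^ (β - (n : ℝ)) * Fn ⟨t, ht⟩ ≤ t ^ (β - (n : ℝ)) * (⨆ s, Fn s) :=
        mul_le_mul_of_nonneg_left h1 (Real.rpow_nonneg ht.le _)
      calc ‖dualDeriv T n xs t‖
          = t ^ (β - (n : ℝ)) * (t ^ ((n : ℝ) - β) * ‖dualDeriv T n xs t‖) := by
            rw [← mul_assoc, mul_comm (t ^ (β - (n : ℝ))), hrpow_cancel n t ht, one_mul]
        _ ≤ t ^ (β - (n : ℝ)) * (⨆ s, Fn s) := h2
        _ = (⨆ s, Fn s) * t ^ (β - (n : ℝ)) := by ring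
    have hm_bound : ∀ t : ℝ, 0 < t →
        ‖dualDeriv T m xs t‖ ≤ (⨆ s, Fn s) * K2 * t ^ (β - (m : ℝ)) :=
      hdown xs _ hSn_nonneg hSn_adm
    have hSm_le : (⨆ s, Fm s) ≤ (⨆ s, Fn s) * K2 := by
      apply ciSup_le
      rintro ⟨t, ht⟩
      have := hm_bound t ht
      calc Fm ⟨t, ht⟩ ≤ t ^ ((m : ℝ) - β) * ((⨆ s, Fn s) * K2 * t ^ (β - (m : ℝ))) :=
            mul_le_mul_of_nonneg_left this (Real.rpow_nonneg ht.le _)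
        _ = (⨆ s, Fn s) * K2 * (t ^ ((m : ℝ) - β) * t ^ (β - (m : ℝ))) := by ring
        _ = (⨆ s, Fn s) * K2 := by rw [hrpow_cancel m t ht, mul_one]
    have hC : (0:ℝ) < 1 + K1 + K2 := by linarith
    constructor
    · rw [inv_mul_le_iff₀ hC]
      calc (⨆ s, Fm s) ≤ (⨆ s, Fn s) * K2 := hSm_le
        _ ≤ (⨆ s, Fn s) * (1 + K1 + K2) := by nlinarith
        _ = (1 + K1 + K2) * (⨆ s, Fn s) := by ring
    · calc (⨆ s, Fn s) ≤ (⨆ s, Fm s) * K1 := hSn_le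
        _ ≤ (⨆ s, Fm s) * (1 + K1 + K2) := by nlinarith
        _ = (1 + K1 + K2) * (⨆ s, Fm s) := by ring
end
end

section
/- Let Y be a Banach space and let φ : (0,∞) → Y be an infinitely differentiable bounded function such that for every integer n ≥ 1 there is a constant C_n with ‖φ^{(n)}(t)‖ ≤ C_n t^{−n} for all t > 0. Then the function ψ(t) := ∫₀^∞ e^{−u} φ(t²/(4u)) u^{−1/2} du is infinitely differentiable on (0,∞), and for every integer n ≥ 0 its derivatives are given by ψ^{(2n)}(t) = (−1)^n ∫₀^∞ e^{−u} φ^{(n)}(t²/(4u)) u^{−1/2} du and ψ^{(2n+1)}(t) = (−1)^n ∫₀^∞ e^{−u} (t/(2u)) φ^{(n+1)}(t²/(4u)) u^{−1/2} du. -/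
open Filter Topology MeasureTheory Set

noncomputable section

set_option linter.unusedSectionVars false
set_option maxHeartbeats 1000000

namespace Stmt8Aux

variable {Y : Type*} [NormedAddCommGroup Y] [NormedSpace ℝ Y] [CompleteSpace Y]

lemma integrable_exp_rpow {p : ℝ} (hp : -1 < p) :
    IntegrableOn (fun u : ℝ => Real.exp (-u) * u ^ p) (Set.Ioi 0) := by
  have := Real.GammaIntegral_convergent (s := p + 1) (by linarith)
  simpa using this

lemma pow_mul_rpow {u : ℝ} (hu : 0 < u) (m : ℕ) :
    u ^ m * u ^ (-(1/2) : ℝ) = u ^ ((m : ℝ) - 1/2) := by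
  rw [← Real.rpow_natCast u m, ← Real.rpow_add hu]
  rw [sub_eq_add_neg]

variable (D : ℕ → ℝ → Y)

/-- integrand of `F` -/
def fF (n : ℕ) (t u : ℝ) : Y := (Real.exp (-u) * u ^ (-(1/2) : ℝ)) • D n (t ^ 2 / (4 * u))

/-- integrand of `G` -/
def fG (n : ℕ) (t u : ℝ) : Y :=
  (Real.exp (-u) * (t / (2 * u)) * u ^ (-(1/2) : ℝ)) • D (n + 1) (t ^ 2 / (4 * u))

def F (n : ℕ) (t : ℝ) : Y := ∫ u in Set.Ioi (0:ℝ), fF D n t u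

def G (n : ℕ) (t : ℝ) : Y := ∫ u in Set.Ioi (0:ℝ), fG D n t u

variable {D}

lemma Dbd' (hb : ∀ n, ∃ C, 0 ≤ C ∧ ∀ x : ℝ, 0 < x → ‖D n x‖ ≤ C / x ^ n) (n : ℕ)
    {t₀ : ℝ} (ht₀ : 0 < t₀) :
    ∃ C, 0 ≤ C ∧ ∀ t ∈ Metric.ball t₀ (t₀ / 2), ∀ u : ℝ, 0 < u →
      ‖D n (t ^ 2 / (4 * u))‖ ≤ C * u ^ n := by
  obtain ⟨C, hC0, hC⟩ := hb n
  refine ⟨C * (4 / (t₀ / 2) ^ 2) ^ n, by positivity, ?_⟩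
  intro t ht u hu
  have htl : t₀ / 2 < t := by
    have := abs_lt.1 (by simpa [Real.dist_eq] using ht)
    linarith [this.1]
  have htp : 0 < t := by linarith
  have hx : 0 < t ^ 2 / (4 * u) := by positivity
  refine (hC _ hx).trans ?_
  rw [div_le_iff₀ (by positivity)]
  have h1 : (t₀ / 2) ^ 2 / (4 * u) ≤ t ^ 2 / (4 * u) := by
    gcongr
  calc C = C * (((t₀ / 2) ^ 2 / (4 * u)) ^ n * ((4 / (t₀ / 2) ^ 2) ^ n * u ^ n)) := by
        rw [← mul_pow, ← mul_pow]
        rw [show (t₀ / 2) ^ 2 / (4 * u) * (4 / (t₀ / 2) ^ 2 * u) = 1 by field_simp]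
        simp
      _ ≤ C * ((t ^ 2 / (4 * u)) ^ n * ((4 / (t₀ / 2) ^ 2) ^ n * u ^ n)) := by
        gcongr
      _ = C * (4 / (t₀ / 2) ^ 2) ^ n * u ^ n * (t ^ 2 / (4 * u)) ^ n := by ring

lemma rpow_collect {u : ℝ} (hu : 0 < u) (m k : ℕ) :
    u ^ m / u ^ k * u ^ (-(1/2) : ℝ) = u ^ ((m : ℝ) - k - 1/2) := by
  rw [← Real.rpow_natCast u m, ← Real.rpow_natCast u k, ← Real.rpow_sub hu, ← Real.rpow_add hu]
  ring_nf

lemma contOn_inner {t : ℝ} (ht : 0 < t) (hc : ∀ n, ContinuousOn (D n) (Set.Ioi 0)) (n : ℕ) :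
    ContinuousOn (fun u : ℝ => D n (t ^ 2 / (4 * u))) (Set.Ioi 0) := by
  apply (hc n).comp
  · exact ContinuousOn.div continuousOn_const (by fun_prop) (fun u hu => by
      have : (0:ℝ) < u := hu
      positivity)
  · intro u hu
    have : (0:ℝ) < u := hu
    exact mem_Ioi.2 (by positivity)

lemma contOn_rpow_half : ContinuousOn (fun u : ℝ => u ^ (-(1/2) : ℝ)) (Set.Ioi 0) :=
  fun u hu => (Real.continuousAt_rpow_const u _ (Or.inl (ne_of_gt hu))).continuousWithinAt

lemma contOn_fF (hc : ∀ n, ContinuousOn (D n) (Set.Ioi 0)) (n : ℕ) {t : ℝ} (ht : 0 < t) :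
    ContinuousOn (fun u => fF D n t u) (Set.Ioi 0) := by
  apply ContinuousOn.smul
  · exact ContinuousOn.mul (by fun_prop) contOn_rpow_half
  · exact contOn_inner ht hc n

lemma contOn_fG (hc : ∀ n, ContinuousOn (D n) (Set.Ioi 0)) (n : ℕ) {t : ℝ} (ht : 0 < t) :
    ContinuousOn (fun u => fG D n t u) (Set.Ioi 0) := by
  apply ContinuousOn.smul
  · apply ContinuousOn.mul _ contOn_rpow_half
    exact ContinuousOn.mul (by fun_prop) (ContinuousOn.div continuousOn_const (by fun_prop)
      (fun u hu => by have : (0:ℝ) < u := hu; positivity))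
  · exact contOn_inner ht hc (n + 1)

lemma norm_fF_le (hb : ∀ n, ∃ C, 0 ≤ C ∧ ∀ x : ℝ, 0 < x → ‖D n x‖ ≤ C / x ^ n) (n : ℕ)
    {t₀ : ℝ} (ht₀ : 0 < t₀) :
    ∃ C, 0 ≤ C ∧ ∀ t ∈ Metric.ball t₀ (t₀ / 2), ∀ u : ℝ, 0 < u →
      ‖fF D n t u‖ ≤ C * (Real.exp (-u) * u ^ ((n : ℝ) - 1/2)) := by
  obtain ⟨C, hC0, hC⟩ := Dbd' hb n ht₀
  refine ⟨C, hC0, fun t ht u hu => ?_⟩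
  rw [fF, norm_smul, Real.norm_eq_abs, abs_of_nonneg (by positivity)]
  calc Real.exp (-u) * u ^ (-(1/2) : ℝ) * ‖D n (t ^ 2 / (4 * u))‖
      ≤ Real.exp (-u) * u ^ (-(1/2) : ℝ) * (C * u ^ n) := by
        gcongr
        exact hC t ht u hu
    _ = C * (Real.exp (-u) * u ^ ((n : ℝ) - 1/2)) := by
        rw [← pow_mul_rpow hu n]; ring

lemma norm_fG_le (hb : ∀ n, ∃ C, 0 ≤ C ∧ ∀ x : ℝ, 0 < x → ‖D n x‖ ≤ C / x ^ n) (n : ℕ)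
    {t₀ : ℝ} (ht₀ : 0 < t₀) :
    ∃ C, 0 ≤ C ∧ ∀ t ∈ Metric.ball t₀ (t₀ / 2), ∀ u : ℝ, 0 < u →
      ‖fG D n t u‖ ≤ C * (Real.exp (-u) * u ^ ((n : ℝ) - 1/2)) := by
  obtain ⟨C, hC0, hC⟩ := Dbd' hb (n + 1) ht₀
  refine ⟨3 * t₀ / 4 * C, by positivity, fun t ht u hu => ?_⟩
  have htub : t < 3 * t₀ / 2 := by
    have := abs_lt.1 (by simpa [Real.dist_eq] using ht)
    linarith [this.2]
  have htl : t₀ / 2 < t := by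
    have := abs_lt.1 (by simpa [Real.dist_eq] using ht)
    linarith [this.1]
  have htp : 0 < t := by linarith
  rw [fG, norm_smul, Real.norm_eq_abs, abs_of_nonneg (by positivity)]
  calc Real.exp (-u) * (t / (2 * u)) * u ^ (-(1/2) : ℝ) * ‖D (n + 1) (t ^ 2 / (4 * u))‖
      ≤ Real.exp (-u) * ((3 * t₀ / 2) / (2 * u)) * u ^ (-(1/2) : ℝ) * (C * u ^ (n + 1)) := by
        gcongr
        exact hC t ht u hu
    _ = 3 * t₀ / 4 * C * (Real.exp (-u) * (u ^ (n + 1) / u ^ 1 * u ^ (-(1/2) : ℝ))) := by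
        field_simp
        ring
    _ = 3 * t₀ / 4 * C * (Real.exp (-u) * u ^ ((n : ℝ) - 1/2)) := by
        rw [rpow_collect hu (n + 1) 1]
        norm_num

variable (D) in
def fG' (n : ℕ) (t u : ℝ) : Y :=
  (Real.exp (-u) * (1 / (2 * u)) * u ^ (-(1/2) : ℝ)) • D (n + 1) (t ^ 2 / (4 * u)) +
  (Real.exp (-u) * (t / (2 * u)) * (t / (2 * u)) * u ^ (-(1/2) : ℝ)) • D (n + 2) (t ^ 2 / (4 * u))

lemma norm_fG'_le (hb : ∀ n, ∃ C, 0 ≤ C ∧ ∀ x : ℝ, 0 < x → ‖D n x‖ ≤ C / x ^ n) (n : ℕ)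
    {t₀ : ℝ} (ht₀ : 0 < t₀) :
    ∃ C, 0 ≤ C ∧ ∀ t ∈ Metric.ball t₀ (t₀ / 2), ∀ u : ℝ, 0 < u →
      ‖fG' D n t u‖ ≤ C * (Real.exp (-u) * u ^ ((n : ℝ) - 1/2)) := by
  obtain ⟨C₁, hC₁0, hC₁⟩ := Dbd' hb (n + 1) ht₀
  obtain ⟨C₂, hC₂0, hC₂⟩ := Dbd' hb (n + 2) ht₀
  refine ⟨C₁ / 2 + 3 * t₀ / 4 * (3 * t₀ / 4) * C₂, by positivity, fun t ht u hu => ?_⟩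
  have htub : t < 3 * t₀ / 2 := by
    have := abs_lt.1 (by simpa [Real.dist_eq] using ht)
    linarith [this.2]
  have htl : t₀ / 2 < t := by
    have := abs_lt.1 (by simpa [Real.dist_eq] using ht)
    linarith [this.1]
  have htp : 0 < t := by linarith
  have h1 : ‖(Real.exp (-u) * (1 / (2 * u)) * u ^ (-(1/2) : ℝ)) • D (n + 1) (t ^ 2 / (4 * u))‖
      ≤ C₁ / 2 * (Real.exp (-u) * u ^ ((n : ℝ) - 1/2)) := by
    rw [norm_smul, Real.norm_eq_abs, abs_of_nonneg (by positivity)]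
    calc Real.exp (-u) * (1 / (2 * u)) * u ^ (-(1/2) : ℝ) * ‖D (n + 1) (t ^ 2 / (4 * u))‖
        ≤ Real.exp (-u) * (1 / (2 * u)) * u ^ (-(1/2) : ℝ) * (C₁ * u ^ (n + 1)) := by
          gcongr
          exact hC₁ t ht u hu
      _ = C₁ / 2 * (Real.exp (-u) * (u ^ (n + 1) / u ^ 1 * u ^ (-(1/2) : ℝ))) := by
          field_simp
      _ = C₁ / 2 * (Real.exp (-u) * u ^ ((n : ℝ) - 1/2)) := by
          rw [rpow_collect hu (n + 1) 1]
          norm_num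
  have h2 : ‖(Real.exp (-u) * (t / (2 * u)) * (t / (2 * u)) * u ^ (-(1/2) : ℝ)) •
        D (n + 2) (t ^ 2 / (4 * u))‖
      ≤ 3 * t₀ / 4 * (3 * t₀ / 4) * C₂ * (Real.exp (-u) * u ^ ((n : ℝ) - 1/2)) := by
    rw [norm_smul, Real.norm_eq_abs, abs_of_nonneg (by positivity)]
    calc Real.exp (-u) * (t / (2 * u)) * (t / (2 * u)) * u ^ (-(1/2) : ℝ) *
          ‖D (n + 2) (t ^ 2 / (4 * u))‖
        ≤ Real.exp (-u) * ((3 * t₀ / 2) / (2 * u)) * ((3 * t₀ / 2) / (2 * u)) *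
            u ^ (-(1/2) : ℝ) * (C₂ * u ^ (n + 2)) := by
          gcongr
          exact hC₂ t ht u hu
      _ = 3 * t₀ / 4 * (3 * t₀ / 4) * C₂ *
            (Real.exp (-u) * (u ^ (n + 2) / u ^ 2 * u ^ (-(1/2) : ℝ))) := by
          field_simp
          ring
      _ = 3 * t₀ / 4 * (3 * t₀ / 4) * C₂ * (Real.exp (-u) * u ^ ((n : ℝ) - 1/2)) := by
          rw [rpow_collect hu (n + 2) 2]
          norm_num
  calc ‖fG' D n t u‖ ≤ _ + _ := norm_add_le _ _
    _ ≤ C₁ / 2 * (Real.exp (-u) * u ^ ((n : ℝ) - 1/2)) +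
        3 * t₀ / 4 * (3 * t₀ / 4) * C₂ * (Real.exp (-u) * u ^ ((n : ℝ) - 1/2)) :=
        add_le_add h1 h2
    _ = (C₁ / 2 + 3 * t₀ / 4 * (3 * t₀ / 4) * C₂) * (Real.exp (-u) * u ^ ((n : ℝ) - 1/2)) := by
        ring

lemma int_fF (hc : ∀ n, ContinuousOn (D n) (Set.Ioi 0))
    (hb : ∀ n, ∃ C, 0 ≤ C ∧ ∀ x : ℝ, 0 < x → ‖D n x‖ ≤ C / x ^ n) (n : ℕ)
    {t : ℝ} (ht : 0 < t) :
    IntegrableOn (fun u => fF D n t u) (Set.Ioi 0) := by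
  obtain ⟨C, hC0, hC⟩ := norm_fF_le hb n ht
  apply Integrable.mono' (g := fun u => C * (Real.exp (-u) * u ^ ((n : ℝ) - 1/2)))
  · exact (integrable_exp_rpow (by push_cast; linarith [Nat.cast_nonneg (α := ℝ) n])).const_mul C
  · exact ((contOn_fF hc n ht).aestronglyMeasurable measurableSet_Ioi)
  · filter_upwards [ae_restrict_mem measurableSet_Ioi] with u hu
    exact hC t (Metric.mem_ball_self (by linarith)) u hu

lemma hasDerivAt_inner_t {u t : ℝ} (hu : 0 < u) :
    HasDerivAt (fun t : ℝ => t ^ 2 / (4 * u)) (t / (2 * u)) t := by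
  have h := (hasDerivAt_pow 2 t).div_const (4 * u)
  refine h.congr_deriv ?_
  norm_num
  ring

lemma hasDerivAt_fF_t (hd : ∀ n, ∀ x ∈ Set.Ioi (0:ℝ), HasDerivAt (D n) (D (n + 1) x) x)
    (n : ℕ) {u t : ℝ} (hu : 0 < u) (ht : 0 < t) :
    HasDerivAt (fun t => fF D n t u) (fG D n t u) t := by
  have hx : t ^ 2 / (4 * u) ∈ Set.Ioi (0:ℝ) := mem_Ioi.2 (by positivity)
  have h1 : HasDerivAt (fun t : ℝ => D n (t ^ 2 / (4 * u)))
      ((t / (2 * u)) • D (n + 1) (t ^ 2 / (4 * u))) t :=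
    HasDerivAt.scomp t (hd n _ hx) (hasDerivAt_inner_t hu)
  have h2 := h1.const_smul (Real.exp (-u) * u ^ (-(1/2) : ℝ))
  convert h2 using 1
  · rfl
  rw [fG, smul_smul]
  congr 1
  ring

lemma hasDerivAt_F (hc : ∀ n, ContinuousOn (D n) (Set.Ioi 0))
    (hd : ∀ n, ∀ x ∈ Set.Ioi (0:ℝ), HasDerivAt (D n) (D (n + 1) x) x)
    (hb : ∀ n, ∃ C, 0 ≤ C ∧ ∀ x : ℝ, 0 < x → ‖D n x‖ ≤ C / x ^ n) (n : ℕ)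
    {t₀ : ℝ} (ht₀ : 0 < t₀) :
    HasDerivAt (F D n) (G D n t₀) t₀ := by
  obtain ⟨C, hC0, hC⟩ := norm_fG_le hb n ht₀
  have key := hasDerivAt_integral_of_dominated_loc_of_deriv_le
    (μ := volume.restrict (Set.Ioi 0)) (x₀ := t₀) (s := Metric.ball t₀ (t₀ / 2))
    (F := fun t u => fF D n t u) (F' := fun t u => fG D n t u)
    (bound := fun u => C * (Real.exp (-u) * u ^ ((n : ℝ) - 1/2)))
    (Metric.ball_mem_nhds _ (by linarith)) ?_ ((int_fF hc hb n ht₀)) ?_ ?_ ?_ ?_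
  · exact key.2
  · filter_upwards [Ioi_mem_nhds ht₀] with t ht
    exact (contOn_fF hc n ht).aestronglyMeasurable measurableSet_Ioi
  · exact (contOn_fG hc n ht₀).aestronglyMeasurable measurableSet_Ioi
  · filter_upwards [ae_restrict_mem measurableSet_Ioi] with u hu t ht
    exact hC t ht u hu
  · exact (integrable_exp_rpow (by
      have : (0:ℝ) ≤ (n:ℝ) := Nat.cast_nonneg n
      linarith)).const_mul C
  · filter_upwards [ae_restrict_mem measurableSet_Ioi] with u hu t ht
    have htl : t₀ / 2 < t := by
      have := abs_lt.1 (by simpa [Real.dist_eq] using ht)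
      linarith [this.1]
    exact hasDerivAt_fF_t hd n hu (by linarith)

lemma hasDerivAt_fG_t (hd : ∀ n, ∀ x ∈ Set.Ioi (0:ℝ), HasDerivAt (D n) (D (n + 1) x) x)
    (n : ℕ) {u t : ℝ} (hu : 0 < u) (ht : 0 < t) :
    HasDerivAt (fun t => fG D n t u) (fG' D n t u) t := by
  have hx : t ^ 2 / (4 * u) ∈ Set.Ioi (0:ℝ) := mem_Ioi.2 (by positivity)
  have hcder : HasDerivAt (fun t : ℝ => Real.exp (-u) * (t / (2 * u)) * u ^ (-(1/2) : ℝ))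
      (Real.exp (-u) * (1 / (2 * u)) * u ^ (-(1/2) : ℝ)) t := by
    exact (((hasDerivAt_id t).div_const (2 * u)).const_mul (Real.exp (-u))).mul_const _
  have hfder : HasDerivAt (fun t : ℝ => D (n + 1) (t ^ 2 / (4 * u)))
      ((t / (2 * u)) • D (n + 2) (t ^ 2 / (4 * u))) t :=
    HasDerivAt.scomp t (hd (n + 1) _ hx) (hasDerivAt_inner_t hu)
  have h := hcder.smul hfder
  convert h using 1
  · rfl
  rw [fG', smul_smul, add_comm]
  congr 2
  ring

lemma int_fG (hc : ∀ n, ContinuousOn (D n) (Set.Ioi 0))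
    (hb : ∀ n, ∃ C, 0 ≤ C ∧ ∀ x : ℝ, 0 < x → ‖D n x‖ ≤ C / x ^ n) (n : ℕ)
    {t : ℝ} (ht : 0 < t) :
    IntegrableOn (fun u => fG D n t u) (Set.Ioi 0) := by
  obtain ⟨C, hC0, hC⟩ := norm_fG_le hb n ht
  apply Integrable.mono' (g := fun u => C * (Real.exp (-u) * u ^ ((n : ℝ) - 1/2)))
  · exact (integrable_exp_rpow (by linarith [Nat.cast_nonneg (α := ℝ) n])).const_mul C
  · exact ((contOn_fG hc n ht).aestronglyMeasurable measurableSet_Ioi)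
  · filter_upwards [ae_restrict_mem measurableSet_Ioi] with u hu
    exact hC t (Metric.mem_ball_self (by linarith)) u hu

lemma hasDerivAt_fF_u (hd : ∀ n, ∀ x ∈ Set.Ioi (0:ℝ), HasDerivAt (D n) (D (n + 1) x) x)
    (n : ℕ) {t₀ u : ℝ} (ht₀ : 0 < t₀) (hu : 0 < u) :
    HasDerivAt (fun u => fF D (n + 1) t₀ u) (-(fF D (n + 1) t₀ u) - fG' D n t₀ u) u := by
  have hx : t₀ ^ 2 / (4 * u) ∈ Set.Ioi (0:ℝ) := mem_Ioi.2 (by positivity)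
  have he : HasDerivAt (fun u : ℝ => Real.exp (-u)) (Real.exp (-u) * (-1)) u :=
    (hasDerivAt_neg u).exp
  have hr : HasDerivAt (fun u : ℝ => u ^ (-(1/2) : ℝ))
      ((-(1/2)) * u ^ ((-(1/2) : ℝ) - 1)) u :=
    Real.hasDerivAt_rpow_const (Or.inl hu.ne')
  have hcder := he.mul hr
  have h4 : HasDerivAt (fun u : ℝ => 4 * u) 4 u := by
    simpa using (hasDerivAt_id u).const_mul (4:ℝ)
  have hinner : HasDerivAt (fun u : ℝ => t₀ ^ 2 / (4 * u))
      ((0 * (4 * u) - t₀ ^ 2 * 4) / (4 * u) ^ 2) u :=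
    (hasDerivAt_const u (t₀ ^ 2)).div h4 (by positivity)
  have hDcomp : HasDerivAt (fun u : ℝ => D (n + 1) (t₀ ^ 2 / (4 * u)))
      (((0 * (4 * u) - t₀ ^ 2 * 4) / (4 * u) ^ 2) • D (n + 2) (t₀ ^ 2 / (4 * u))) u :=
    HasDerivAt.scomp u (hd (n + 1) _ hx) hinner
  have h := hcder.smul hDcomp
  convert h using 1
  · rfl
  have hru : u ^ ((-(1/2) : ℝ) - 1) = u ^ (-(1/2) : ℝ) * u⁻¹ := by
    rw [Real.rpow_sub hu, Real.rpow_one, div_eq_mul_inv]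
  rw [fF, fG', hru, Pi.mul_apply]
  match_scalars <;> field_simp <;> ring

lemma fF_zero (n : ℕ) (t₀ : ℝ) : fF D n t₀ 0 = 0 := by
  simp [fF, Real.zero_rpow (show (-(1/2) : ℝ) ≠ 0 by norm_num)]

lemma norm_fF_le' (hb : ∀ n, ∃ C, 0 ≤ C ∧ ∀ x : ℝ, 0 < x → ‖D n x‖ ≤ C / x ^ n) (n : ℕ)
    {t₀ : ℝ} (ht₀ : 0 < t₀) :
    ∃ C, 0 ≤ C ∧ ∀ u : ℝ, 0 < u →
      ‖fF D (n + 1) t₀ u‖ ≤ C * (Real.exp (-u) * u ^ ((n : ℝ) + 1/2)) := by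
  obtain ⟨C, hC0, hC⟩ := Dbd' hb (n + 1) ht₀
  refine ⟨C, hC0, fun u hu => ?_⟩
  rw [fF, norm_smul, Real.norm_eq_abs, abs_of_nonneg (by positivity)]
  calc Real.exp (-u) * u ^ (-(1/2) : ℝ) * ‖D (n + 1) (t₀ ^ 2 / (4 * u))‖
      ≤ Real.exp (-u) * u ^ (-(1/2) : ℝ) * (C * u ^ (n + 1)) := by
        gcongr
        exact hC t₀ (Metric.mem_ball_self (by linarith)) u hu
    _ = C * (Real.exp (-u) * (u ^ (n + 1) * u ^ (-(1/2) : ℝ))) := by ring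
    _ = C * (Real.exp (-u) * u ^ ((n : ℝ) + 1/2)) := by
        rw [pow_mul_rpow hu (n + 1),
          show ((n + 1 : ℕ) : ℝ) - 1/2 = (n : ℝ) + 1/2 by push_cast; ring]

lemma fF_tendsto_zero_atZero (hb : ∀ n, ∃ C, 0 ≤ C ∧ ∀ x : ℝ, 0 < x → ‖D n x‖ ≤ C / x ^ n)
    (n : ℕ) {t₀ : ℝ} (ht₀ : 0 < t₀) :
    ContinuousWithinAt (fun u => fF D (n + 1) t₀ u) (Set.Ici 0) 0 := by
  obtain ⟨C, hC0, hC⟩ := norm_fF_le' hb n ht₀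
  have hp : (0:ℝ) < (n : ℝ) + 1/2 := by positivity
  rw [ContinuousWithinAt, fF_zero]
  apply squeeze_zero_norm' (a := fun u => C * (Real.exp (-u) * u ^ ((n : ℝ) + 1/2)))
  · apply eventually_nhdsWithin_of_forall
    intro u hu
    rcases eq_or_lt_of_le (mem_Ici.1 hu) with h | h
    · rw [← h, fF_zero]
      simp [Real.zero_rpow hp.ne']
      positivity
    · exact hC u h
  · have h1 : ContinuousAt (fun u : ℝ => Real.exp (-u)) 0 := by fun_prop
    have h2 : ContinuousAt (fun u : ℝ => u ^ ((n : ℝ) + 1/2)) 0 :=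
      Real.continuousAt_rpow_const 0 _ (Or.inr hp.le)
    have h3 : Tendsto (fun u : ℝ => C * (Real.exp (-u) * u ^ ((n : ℝ) + 1/2)))
        (𝓝[Set.Ici 0] 0) (𝓝 (C * (Real.exp (-0) * (0:ℝ) ^ ((n : ℝ) + 1/2)))) :=
      ((continuousAt_const.mul (h1.mul h2)).tendsto).mono_left nhdsWithin_le_nhds
    have h0 : C * (Real.exp (-(0:ℝ)) * (0:ℝ) ^ ((n : ℝ) + 1/2)) = 0 := by
      rw [Real.zero_rpow hp.ne']; simp
    rwa [h0] at h3

lemma fF_tendsto_zero_atTop (hb : ∀ n, ∃ C, 0 ≤ C ∧ ∀ x : ℝ, 0 < x → ‖D n x‖ ≤ C / x ^ n)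
    (n : ℕ) {t₀ : ℝ} (ht₀ : 0 < t₀) :
    Tendsto (fun u => fF D (n + 1) t₀ u) atTop (𝓝 0) := by
  obtain ⟨C, hC0, hC⟩ := norm_fF_le' hb n ht₀
  apply squeeze_zero_norm' (a := fun u => C * (Real.exp (-u) * u ^ ((n : ℝ) + 1/2)))
  · filter_upwards [Ioi_mem_atTop (0:ℝ)] with u hu
    exact hC u hu
  · have := (tendsto_rpow_mul_exp_neg_mul_atTop_nhds_zero ((n : ℝ) + 1/2) 1 one_pos).const_mul C
    simp only [mul_zero] at this
    apply this.congr
    intro x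
    rw [neg_one_mul]
    ring

lemma integral_fG' (hc : ∀ n, ContinuousOn (D n) (Set.Ioi 0))
    (hd : ∀ n, ∀ x ∈ Set.Ioi (0:ℝ), HasDerivAt (D n) (D (n + 1) x) x)
    (hb : ∀ n, ∃ C, 0 ≤ C ∧ ∀ x : ℝ, 0 < x → ‖D n x‖ ≤ C / x ^ n) (n : ℕ)
    {t₀ : ℝ} (ht₀ : 0 < t₀)
    (hint : IntegrableOn (fun u => fG' D n t₀ u) (Set.Ioi 0)) :
    ∫ u in Set.Ioi (0:ℝ), fG' D n t₀ u = - F D (n + 1) t₀ := by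
  have hintF := int_fF hc hb (n + 1) ht₀
  have hint2 : IntegrableOn (fun u => -(fF D (n + 1) t₀ u) - fG' D n t₀ u) (Set.Ioi 0) :=
    hintF.neg.sub hint
  have key := integral_Ioi_of_hasDerivAt_of_tendsto
    (fF_tendsto_zero_atZero hb n ht₀)
    (fun u hu => hasDerivAt_fF_u hd n ht₀ (mem_Ioi.1 hu))
    hint2 (fF_tendsto_zero_atTop hb n ht₀)
  rw [fF_zero, sub_zero] at key
  have hnegF : IntegrableOn (fun u => -fF D (n + 1) t₀ u) (Set.Ioi 0) := hintF.neg
  have e1 : (∫ u in Set.Ioi (0:ℝ), (-fF D (n + 1) t₀ u - fG' D n t₀ u))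
      = (∫ u in Set.Ioi (0:ℝ), -fF D (n + 1) t₀ u) - ∫ u in Set.Ioi (0:ℝ), fG' D n t₀ u :=
    integral_sub hnegF hint
  rw [e1, integral_neg] at key
  have : (∫ u in Set.Ioi (0:ℝ), fF D (n + 1) t₀ u) = F D (n + 1) t₀ := rfl
  rw [this] at key
  exact (sub_eq_zero.mp key).symm

lemma hasDerivAt_G (hc : ∀ n, ContinuousOn (D n) (Set.Ioi 0))
    (hd : ∀ n, ∀ x ∈ Set.Ioi (0:ℝ), HasDerivAt (D n) (D (n + 1) x) x)
    (hb : ∀ n, ∃ C, 0 ≤ C ∧ ∀ x : ℝ, 0 < x → ‖D n x‖ ≤ C / x ^ n) (n : ℕ)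
    {t₀ : ℝ} (ht₀ : 0 < t₀) :
    HasDerivAt (G D n) (- F D (n + 1) t₀) t₀ := by
  obtain ⟨C, hC0, hC⟩ := norm_fG'_le hb n ht₀
  have key := hasDerivAt_integral_of_dominated_loc_of_deriv_le
    (μ := volume.restrict (Set.Ioi 0)) (x₀ := t₀) (s := Metric.ball t₀ (t₀ / 2))
    (F := fun t u => fG D n t u) (F' := fun t u => fG' D n t u)
    (bound := fun u => C * (Real.exp (-u) * u ^ ((n : ℝ) - 1/2)))
    (Metric.ball_mem_nhds _ (by linarith)) ?_ ((int_fG hc hb n ht₀)) ?_ ?_ ?_ ?_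
  · have h := key.2
    rwa [integral_fG' hc hd hb n ht₀ key.1] at h
  · filter_upwards [Ioi_mem_nhds ht₀] with t ht
    exact (contOn_fG hc n ht).aestronglyMeasurable measurableSet_Ioi
  · apply ContinuousOn.aestronglyMeasurable _ measurableSet_Ioi
    apply ContinuousOn.add
    · apply ContinuousOn.smul
      · exact ContinuousOn.mul (ContinuousOn.mul (by fun_prop) (ContinuousOn.div
          continuousOn_const (by fun_prop) (fun u hu => by
            have : (0:ℝ) < u := hu; positivity))) contOn_rpow_half
      · exact contOn_inner ht₀ hc (n + 1)
    · apply ContinuousOn.smul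
      · exact ContinuousOn.mul (ContinuousOn.mul (ContinuousOn.mul (by fun_prop)
          (ContinuousOn.div continuousOn_const (by fun_prop) (fun u hu => by
            have : (0:ℝ) < u := hu; positivity)))
          (ContinuousOn.div continuousOn_const (by fun_prop) (fun u hu => by
            have : (0:ℝ) < u := hu; positivity))) contOn_rpow_half
      · exact contOn_inner ht₀ hc (n + 2)
  · filter_upwards [ae_restrict_mem measurableSet_Ioi] with u hu t ht
    exact hC t ht u hu
  · exact (integrable_exp_rpow (by linarith [Nat.cast_nonneg (α := ℝ) n])).const_mul C
  · filter_upwards [ae_restrict_mem measurableSet_Ioi] with u hu t ht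
    have htl : t₀ / 2 < t := by
      have := abs_lt.1 (by simpa [Real.dist_eq] using ht)
      linarith [this.1]
    exact hasDerivAt_fG_t hd n hu (by linarith)

variable (D) in
def H (k : ℕ) : ℝ → Y := fun t =>
  if Even k then ((-1:ℝ) ^ (k / 2)) • F D (k / 2) t else ((-1:ℝ) ^ (k / 2)) • G D (k / 2) t

lemma hasDerivAt_H (hc : ∀ n, ContinuousOn (D n) (Set.Ioi 0))
    (hd : ∀ n, ∀ x ∈ Set.Ioi (0:ℝ), HasDerivAt (D n) (D (n + 1) x) x)
    (hb : ∀ n, ∃ C, 0 ≤ C ∧ ∀ x : ℝ, 0 < x → ‖D n x‖ ≤ C / x ^ n)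
    (k : ℕ) {t : ℝ} (ht : 0 < t) :
    HasDerivAt (H D k) (H D (k + 1) t) t := by
  rcases Nat.even_or_odd k with ⟨m, hm⟩ | ⟨m, hm⟩
  · subst hm
    have hev : Even (m + m) := ⟨m, rfl⟩
    have hodd : ¬ Even (m + m + 1) := by simp [Nat.even_add_one, hev]
    have e1 : (m + m) / 2 = m := by omega
    have e2 : (m + m + 1) / 2 = m := by omega
    have hfun : H D (m + m) = fun s => ((-1:ℝ) ^ m) • F D m s := by
      funext s; simp only [H, if_pos hev, e1]
    rw [hfun]
    simp only [H, if_neg hodd, e2]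
    exact (hasDerivAt_F hc hd hb m ht).const_smul ((-1:ℝ) ^ m)
  · subst hm
    have hodd : ¬ Even (2 * m + 1) := by simp [Nat.even_add_one]
    have hev : Even (2 * m + 1 + 1) := ⟨m + 1, by ring⟩
    have e1 : (2 * m + 1) / 2 = m := by omega
    have e2 : (2 * m + 1 + 1) / 2 = m + 1 := by omega
    have hfun : H D (2 * m + 1) = fun s => ((-1:ℝ) ^ m) • G D m s := by
      funext s; simp only [H, if_neg hodd, e1]
    rw [hfun]
    simp only [H, if_pos hev, e2]
    have h := (hasDerivAt_G hc hd hb m ht).const_smul ((-1:ℝ) ^ m)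
    have hval : ((-1:ℝ) ^ (m + 1)) • F D (m + 1) t = ((-1:ℝ) ^ m) • -F D (m + 1) t := by
      rw [pow_succ, mul_smul, neg_one_smul]
    rw [hval]
    exact h

lemma iter_eq_H (hc : ∀ n, ContinuousOn (D n) (Set.Ioi 0))
    (hd : ∀ n, ∀ x ∈ Set.Ioi (0:ℝ), HasDerivAt (D n) (D (n + 1) x) x)
    (hb : ∀ n, ∃ C, 0 ≤ C ∧ ∀ x : ℝ, 0 < x → ‖D n x‖ ≤ C / x ^ n)
    (k : ℕ) : ∀ t ∈ Set.Ioi (0:ℝ), iteratedDerivWithin k (F D 0) (Set.Ioi 0) t = H D k t := by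
  induction k with
  | zero =>
    intro t ht
    simp [H]
  | succ k ih =>
    intro t ht
    have hU : UniqueDiffWithinAt ℝ (Set.Ioi (0:ℝ)) t := isOpen_Ioi.uniqueDiffOn t ht
    rw [iteratedDerivWithin_succ, derivWithin_congr (fun x hx => ih x hx) (ih t ht),
      derivWithin_of_isOpen isOpen_Ioi ht]
    exact (hasDerivAt_H hc hd hb k ht).deriv

theorem main (hc : ∀ n, ContinuousOn (D n) (Set.Ioi 0))
    (hd : ∀ n, ∀ x ∈ Set.Ioi (0:ℝ), HasDerivAt (D n) (D (n + 1) x) x)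
    (hb : ∀ n, ∃ C, 0 ≤ C ∧ ∀ x : ℝ, 0 < x → ‖D n x‖ ≤ C / x ^ n) :
    ContDiffOn ℝ (⊤ : ℕ∞) (F D 0) (Set.Ioi 0) ∧
    (∀ n : ℕ, ∀ t : ℝ, 0 < t →
      iteratedDerivWithin (2 * n) (F D 0) (Set.Ioi 0) t = ((-1:ℝ) ^ n) • F D n t) ∧
    (∀ n : ℕ, ∀ t : ℝ, 0 < t →
      iteratedDerivWithin (2 * n + 1) (F D 0) (Set.Ioi 0) t = ((-1:ℝ) ^ n) • G D n t) := by
  refine ⟨?_, ?_, ?_⟩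
  · rw [contDiffOn_iff_continuousOn_differentiableOn_deriv isOpen_Ioi.uniqueDiffOn]
    constructor
    · intro m _
      exact ContinuousOn.congr
        (fun x hx => ((hasDerivAt_H hc hd hb m hx).differentiableAt.continuousAt).continuousWithinAt)
        (fun x hx => iter_eq_H hc hd hb m x hx)
    · intro m _
      exact DifferentiableOn.congr
        (fun x hx => (hasDerivAt_H hc hd hb m hx).differentiableAt.differentiableWithinAt)
        (fun x hx => iter_eq_H hc hd hb m x hx)
  · intro n t ht
    rw [iter_eq_H hc hd hb (2 * n) t ht]
    have hev : Even (2 * n) := ⟨n, by ring⟩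
    have e1 : (2 * n) / 2 = n := by omega
    simp only [H, if_pos hev, e1]
  · intro n t ht
    rw [iter_eq_H hc hd hb (2 * n + 1) t ht]
    have hodd : ¬ Even (2 * n + 1) := by simp [Nat.even_add_one]
    have e1 : (2 * n + 1) / 2 = n := by omega
    simp only [H, if_neg hodd, e1]

end Stmt8Aux

/-- if `φ : (0,∞) → Y` is a bounded `C^∞` function with
`‖φ^{(n)}(t)‖ ≤ C_n t^{-n}` for all `n ≥ 1` and `t > 0`, then
`ψ(t) := ∫₀^∞ e^{-u} φ(t²/(4u)) u^{-1/2} du` is `C^∞` on `(0,∞)` and its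
derivatives are given by the stated formulas. -/
theorem stmt8 {Y : Type*} [NormedAddCommGroup Y] [NormedSpace ℝ Y] [CompleteSpace Y]
    (φ : ℝ → Y)
    (hbdd : ∃ M : ℝ, ∀ t : ℝ, 0 < t → ‖φ t‖ ≤ M)
    (hsmooth : ContDiffOn ℝ (⊤ : ℕ∞) φ (Set.Ioi 0))
    (hder : ∀ n : ℕ, 1 ≤ n → ∃ C : ℝ, ∀ t : ℝ, 0 < t →
      ‖iteratedDerivWithin n φ (Set.Ioi 0) t‖ ≤ C / t ^ n) :
    ContDiffOn ℝ (⊤ : ℕ∞)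
      (fun t : ℝ => ∫ u in Set.Ioi (0:ℝ),
        (Real.exp (-u) * u ^ (-(1/2) : ℝ)) • φ (t ^ 2 / (4 * u))) (Set.Ioi 0) ∧
    (∀ n : ℕ, ∀ t : ℝ, 0 < t →
      iteratedDerivWithin (2 * n)
        (fun s : ℝ => ∫ u in Set.Ioi (0:ℝ),
          (Real.exp (-u) * u ^ (-(1/2) : ℝ)) • φ (s ^ 2 / (4 * u))) (Set.Ioi 0) t
      = ((-1 : ℝ) ^ n) •
        ∫ u in Set.Ioi (0:ℝ), (Real.exp (-u) * u ^ (-(1/2) : ℝ)) •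
          iteratedDerivWithin n φ (Set.Ioi 0) (t ^ 2 / (4 * u))) ∧
    (∀ n : ℕ, ∀ t : ℝ, 0 < t →
      iteratedDerivWithin (2 * n + 1)
        (fun s : ℝ => ∫ u in Set.Ioi (0:ℝ),
          (Real.exp (-u) * u ^ (-(1/2) : ℝ)) • φ (s ^ 2 / (4 * u))) (Set.Ioi 0) t
      = ((-1 : ℝ) ^ n) •
        ∫ u in Set.Ioi (0:ℝ), (Real.exp (-u) * (t / (2 * u)) * u ^ (-(1/2) : ℝ)) •
          iteratedDerivWithin (n + 1) φ (Set.Ioi 0) (t ^ 2 / (4 * u))) := by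
  classical
  set D : ℕ → ℝ → Y := fun n => iteratedDerivWithin n φ (Set.Ioi 0) with hD
  have hUD : UniqueDiffOn ℝ (Set.Ioi (0:ℝ)) := isOpen_Ioi.uniqueDiffOn
  have hc : ∀ n, ContinuousOn (D n) (Set.Ioi 0) := fun n =>
    hsmooth.continuousOn_iteratedDerivWithin (by exact_mod_cast le_top) hUD
  have hd : ∀ n, ∀ x ∈ Set.Ioi (0:ℝ), HasDerivAt (D n) (D (n + 1) x) x := by
    intro n x hx
    have hdiff : DifferentiableOn ℝ (D n) (Set.Ioi 0) :=
      hsmooth.differentiableOn_iteratedDerivWithin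
        (by exact_mod_cast lt_top_iff_ne_top.2 (by simp)) hUD
    have h1 : DifferentiableAt ℝ (D n) x := (hdiff x hx).differentiableAt
      (isOpen_Ioi.mem_nhds hx)
    have h2 := h1.hasDerivAt
    rwa [← derivWithin_of_isOpen isOpen_Ioi hx, ← iteratedDerivWithin_succ] at h2
  have hb : ∀ n, ∃ C, 0 ≤ C ∧ ∀ x : ℝ, 0 < x → ‖D n x‖ ≤ C / x ^ n := by
    intro n
    cases n with
    | zero =>
      obtain ⟨M, hM⟩ := hbdd
      exact ⟨max M 0, le_max_right _ _, fun x hx => by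
        simpa [D] using (hM x hx).trans (le_max_left M 0)⟩
    | succ m =>
      obtain ⟨C, hC⟩ := hder (m + 1) (by omega)
      refine ⟨max C 0, le_max_right _ _, fun x hx => (hC x hx).trans ?_⟩
      gcongr
      exact le_max_left _ _
  obtain ⟨hsm, h2, h3⟩ := Stmt8Aux.main hc hd hb
  have hψ : (fun t : ℝ => ∫ u in Set.Ioi (0:ℝ),
      (Real.exp (-u) * u ^ (-(1/2) : ℝ)) • φ (t ^ 2 / (4 * u))) = Stmt8Aux.F D 0 := by
    funext t
    simp [Stmt8Aux.F, Stmt8Aux.fF, D]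
  refine ⟨?_, ?_, ?_⟩
  · rw [hψ]; exact hsm
  · intro n t ht
    rw [hψ]
    exact h2 n t ht
  · intro n t ht
    rw [hψ]
    exact h3 n t ht
end
end
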